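/- For $t \geq 1$, let $\mu$ be an overpartition in $\overline{\mathcal{B}}^{>}_0(\alpha_1,\ldots,\alpha_\lambda;\eta,k,r|t)$ that possesses at least one $(k-2)$-band belonging to $[(t-1)\eta, \overline{(t+1)\eta})$. Then: (1) all $(k-2)$-bands of $\mu$ belonging to $[(t-1)\eta, \overline{(t+1)\eta})$ have the same type (N or O); (2) if $g(\mu) = \overline{(t+1)\eta}$ or $g(\mu) = (t+1)\eta$, then all such $(k-2)$-bands are of type O. -/

import Mathlib

/-- A part of an overpartition: a size together with a flag telling
whether the part is overlined. -/
structure OPart where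
  size : ℕ
  isOver : Bool
deriving DecidableEq

/-- The value of a part in the ordering `1̄ < 1 < 2̄ < 2 < ⋯`:
an overlined part of size `t` has value `2t - 1`, a non-overlined one `2t`. -/
def OPart.val (p : OPart) : ℕ := 2 * p.size - (if p.isOver then 1 else 0)

def dpart : OPart := ⟨0, false⟩

/-- value of the `i`-th part (0-based). -/
def pval (π : List OPart) (i : ℕ) : ℕ := (π.getD i dpart).val

def pover (π : List OPart) (i : ℕ) : Bool := (π.getD i dpart).isOver

def psize (π : List OPart) (i : ℕ) : ℕ := (π.getD i dpart).size

/-- the weight `|π|`: the sum of the sizes of the parts. -/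
def wt (π : List OPart) : ℕ := (π.map OPart.size).sum

/-- An overpartition: a sequence of positive parts, non-increasing in the
ordering `1̄ < 1 < 2̄ < 2 < ⋯`, in which each size is overlined at most once
(the overlined copy, being smallest among equal sizes, is the last occurrence). -/
def IsOverPartition (π : List OPart) : Prop :=
  List.Pairwise (fun p q : OPart => q.val ≤ p.val) π ∧
  (∀ p ∈ π, 0 < p.size) ∧
  (∀ t : ℕ, π.count (⟨t, true⟩ : OPart) ≤ 1)

/-- `{π_{i+l}}_{0 ≤ l ≤ m-1}` is an `m`-band of `π`:
`π_i ≤ π_{i+m-1} + η`, with strict inequality if `π_i` is overlined. -/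
def IsBand (η : ℕ) (π : List OPart) (m i : ℕ) : Prop :=
  i + m ≤ π.length ∧
  pval π i ≤ pval π (i + m - 1) + 2 * η ∧
  (pover π i = true → pval π i < pval π (i + m - 1) + 2 * η)

/-- `V̄_π(N)`: the number of overlined parts of value at most `N`
whose size is not divisible by `η`. -/
def Vbar (η : ℕ) (π : List OPart) (N : ℕ) : ℕ :=
  π.countP (fun p => p.isOver && decide (p.val ≤ N) && !(decide (p.size % η = 0)))

/-- `Ō_π(N)`: the number of overlined parts of value at least `N`
whose size is divisible by `η`. -/
def Obar (η : ℕ) (π : List OPart) (N : ℕ) : ℕ :=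
  π.countP (fun p => p.isOver && decide (N ≤ p.val) && decide (p.size % η = 0))

/-- `f_{≤η}(π)`: the number of parts not exceeding `η`. -/
def fLe (η : ℕ) (π : List OPart) : ℕ :=
  π.countP (fun p => decide (p.val ≤ 2 * η))

/-- `[|π_i|/η] + ⋯ + [|π_{i+m-1}|/η]`. -/
def bandSum (η : ℕ) (π : List OPart) (i m : ℕ) : ℕ :=
  ∑ l ∈ Finset.range m, psize π (i + l) / η

/-- Every part is congruent to `0, α_1, …, α_λ` modulo `η`. -/
def CongParts (α : ℕ → ℕ) (lam η : ℕ) (π : List OPart) : Prop :=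
  ∀ p ∈ π, p.size % η = 0 ∨ ∃ s, 1 ≤ s ∧ s ≤ lam ∧ p.size % η = α s

/-- The class `B̄(α_1,…,α_λ; η, k, r)`: conditions (1)–(4) of the definition
of `B̄₀`. -/
def InBbar (α : ℕ → ℕ) (lam η k r : ℕ) (π : List OPart) : Prop :=
  IsOverPartition π ∧
  CongParts α lam η π ∧
  (∀ p ∈ π, p.isOver = false → η ∣ p.size) ∧
  (∀ i, i + k ≤ π.length →
    pval π (i + k - 1) + 2 * η ≤ pval π i ∧
    (pover π i = false → pval π (i + k - 1) + 2 * η < pval π i)) ∧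
  fLe η π ≤ r

/-- An `m`-band at `i` is even:
`[|π_i|/η]+⋯+[|π_{i+m-1}|/η] ≡ r - 1 + V̄_π(π_i) + Ō_π(π_{i+m-1}) (mod 2)`. -/
def EvenBand (η r : ℕ) (π : List OPart) (m i : ℕ) : Prop :=
  Int.ModEq 2 (bandSum η π i m)
    ((r : ℤ) - 1 + (Vbar η π (pval π i) : ℤ) + (Obar η π (pval π (i + m - 1)) : ℤ))

/-- Condition (5) of the definition of `B̄₀`. -/
def Cond5 (η k r : ℕ) (π : List OPart) : Prop :=
  fLe η π = r → (⟨η, true⟩ : OPart) ∉ π →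
    ∃ i, IsBand η π (k - 1) i ∧ pval π i < 2 * (2 * η) - 1

/-- The class `B̄₀(α_1,…,α_λ; η, k, r)`: conditions (1)–(6). -/
def InB0 (α : ℕ → ℕ) (lam η k r : ℕ) (π : List OPart) : Prop :=
  InBbar α lam η k r π ∧ Cond5 η k r π ∧
  ∀ i, IsBand η π (k - 1) i → EvenBand η r π (k - 1) i

/-- `s(π) > t̄η`: every overlined part divisible by `η` has size `> tη`. -/
def SGt (η t : ℕ) (π : List OPart) : Prop :=
  ∀ p ∈ π, p.isOver = true → η ∣ p.size → t * η < p.size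

/-- `s(π) = t̄η`. -/
def SEq (η t : ℕ) (π : List OPart) : Prop :=
  (⟨t * η, true⟩ : OPart) ∈ π ∧
  ∀ p ∈ π, p.isOver = true → η ∣ p.size → t * η ≤ p.size

/-- `g(π) ≥ x` (value `x`): every part starting a `(k-1)`-band has value `≥ x`. -/
def GGe (η k : ℕ) (π : List OPart) (x : ℕ) : Prop :=
  ∀ i, IsBand η π (k - 1) i → x ≤ pval π i

/-- `g(π) < x`: some part starting a `(k-1)`-band has value `< x`. -/
def GLt (η k : ℕ) (π : List OPart) (x : ℕ) : Prop :=
  ∃ i, IsBand η π (k - 1) i ∧ pval π i < x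

/-- `π ∈ B̄₀^=(α_1,…,α_λ; η,k,r | t)`. -/
def InBeq (α : ℕ → ℕ) (lam η k r t : ℕ) (π : List OPart) : Prop :=
  InB0 α lam η k r π ∧
  ((SEq η t π ∧ GGe η k π (2 * (t * η) - 1)) ∨
   (SGt η t π ∧ GGe η k π (2 * (t * η)) ∧ GLt η k π (2 * ((t + 1) * η) - 1)))

/-- `π ∈ B̄₀^>(α_1,…,α_λ; η,k,r | t)`. -/
def InBgt (α : ℕ → ℕ) (lam η k r t : ℕ) (π : List OPart) : Prop :=
  InB0 α lam η k r π ∧ SGt η t π ∧ GGe η k π (2 * ((t + 1) * η) - 1)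

/-- An `m`-band belonging to the closed interval `[(t-1)η, (t+1)η]`. -/
def BandInC (η t : ℕ) (π : List OPart) (m i : ℕ) : Prop :=
  IsBand η π m i ∧ 2 * ((t - 1) * η) ≤ pval π (i + m - 1) ∧
  pval π i ≤ 2 * ((t + 1) * η)

/-- An `m`-band belonging to `[(t-1)η, \overline{(t+1)η})`. -/
def BandInO (η t : ℕ) (π : List OPart) (m i : ℕ) : Prop :=
  IsBand η π m i ∧ 2 * ((t - 1) * η) ≤ pval π (i + m - 1) ∧
  pval π i < 2 * ((t + 1) * η) - 1

/-- An `m`-band at `i` is of type N. -/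
def TypeN (η r t : ℕ) (π : List OPart) (m i : ℕ) : Prop :=
  Int.ModEq 2 (bandSum η π i m)
    ((t : ℤ) + (r : ℤ) - 1 + (Vbar η π (pval π i) : ℤ) +
      (Obar η π (pval π (i + m - 1)) : ℤ))

/-- `π` is obtained from `μ` by inserting the part `p`. -/
def InsertPart (μ : List OPart) (p : OPart) (π : List OPart) : Prop :=
  ∃ l1 l2, μ = l1 ++ l2 ∧ π = l1 ++ p :: l2

/-- The `(k-1)`-reduction `D_t` as a relation: `μ = D_t(π)`. -/
def DtRel (η t : ℕ) (π μ : List OPart) : Prop :=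
  ((⟨t * η, true⟩ : OPart) ∈ π ∧ InsertPart μ ⟨t * η, true⟩ π) ∨
  ((⟨t * η, true⟩ : OPart) ∉ π ∧ InsertPart μ ⟨t * η, false⟩ π)

/-- `μ` has a `(k-2)`-band belonging to `[(t-1)η, \overline{(t+1)η})` of type N. -/
def HasTypeNBand (η r k t : ℕ) (μ : List OPart) : Prop :=
  ∃ i, BandInO η t μ (k - 2) i ∧ TypeN η r t μ (k - 2) i

/-- The `(k-1)`-augmentation `C_t` as a relation: `π = C_t(μ)`. -/
def CtRel (η r k t : ℕ) (μ π : List OPart) : Prop :=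
  (HasTypeNBand η r k t μ ∧ InsertPart μ ⟨t * η, false⟩ π) ∨
  (¬ HasTypeNBand η r k t μ ∧ InsertPart μ ⟨t * η, true⟩ π)

/-- `B₁`-type overpartitions: conditions (1)–(4), no overlined part divisible
by `η`, and at most `r - 1` parts not exceeding `η`. -/
def InB1over (α : ℕ → ℕ) (lam η k r : ℕ) (π : List OPart) : Prop :=
  InBbar α lam η k r π ∧ (∀ p ∈ π, p.isOver = true → ¬ η ∣ p.size) ∧ fLe η π < r

/-- `D_η`: partitions into distinct parts divisible by `η`. -/
def InD (η : ℕ) (τ : List ℕ) : Prop :=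
  List.Pairwise (· > ·) τ ∧ ∀ x ∈ τ, 0 < x ∧ η ∣ x

/-- Bressoud's class `B₁(α_1,…,α_λ; η,k,r)` of ordinary partitions. -/
def InB1nat (α : ℕ → ℕ) (lam η k r : ℕ) (σ : List ℕ) : Prop :=
  List.Pairwise (· ≥ ·) σ ∧ (∀ x ∈ σ, 0 < x) ∧
  (∀ x ∈ σ, x % η = 0 ∨ ∃ s, 1 ≤ s ∧ s ≤ lam ∧ x % η = α s) ∧
  (∀ x : ℕ, ¬ η ∣ x → σ.count x ≤ 1) ∧
  (∀ i, i + k ≤ σ.length →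
    σ.getD (i + k - 1) 0 + η ≤ σ.getD i 0 ∧
    (η ∣ σ.getD i 0 → σ.getD (i + k - 1) 0 + η < σ.getD i 0)) ∧
  σ.countP (fun x => decide (x ≤ η)) < r

/-- The class `Ā₀(α_1,…,α_λ; η,k,r)`. Congruence conditions involving `η/2`
are stated with sizes doubled. -/
def InA0 (α : ℕ → ℕ) (lam η k r : ℕ) (π : List OPart) : Prop :=
  IsOverPartition π ∧
  CongParts α lam η π ∧
  (Even lam →
    ∀ p ∈ π, p.isOver = false →
      η ∣ p.size ∧
      ¬ (2 * η * (2 * k - lam - 1) ∣ 2 * p.size) ∧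
      2 * p.size % (2 * η * (2 * k - lam - 1)) ≠ η * (2 * r - lam) ∧
      2 * p.size % (2 * η * (2 * k - lam - 1)) ≠
        2 * η * (2 * k - lam - 1) - η * (2 * r - lam)) ∧
  (¬ Even lam →
    (∀ p ∈ π, p.isOver = false →
      η ∣ 2 * p.size ∧
      p.size % (2 * η) ≠ η ∧
      ¬ (2 * η * (2 * k - lam - 1) ∣ 2 * p.size) ∧
      2 * p.size % (2 * η * (2 * k - lam - 1)) ≠ η * (2 * r - lam) ∧
      2 * p.size % (2 * η * (2 * k - lam - 1)) ≠
        2 * η * (2 * k - lam - 1) - η * (2 * r - lam)) ∧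
    (∀ p ∈ π, p.isOver = true → 2 * p.size % (2 * η) ≠ η))


section Aux
open Finset

lemma opart_ext (p q : OPart) (h1 : p.size = q.size) (h2 : p.isOver = q.isOver) : p = q := by
  cases p; cases q; simp_all

lemma countP_eq_sum' (p : OPart → Bool) (l : List OPart) :
    l.countP p = ∑ e ∈ Finset.range l.length, (if p (l.getD e dpart) = true then 1 else 0) := by
  induction l with
  | nil => simp
  | cons a l ih =>
    rw [List.countP_cons, List.length_cons, Finset.sum_range_succ']
    simp only [List.getD_cons_succ, List.getD_cons_zero]
    rw [← ih]

variable (μ : List OPart)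

lemma pval_def (e : ℕ) :
    pval μ e = 2 * psize μ e - (if pover μ e then 1 else 0) := rfl

lemma pval_eq_zero (e : ℕ) (he : μ.length ≤ e) : pval μ e = 0 := by
  unfold pval
  rw [List.getD_eq_default _ _ he]
  rfl

lemma getD_mem (e : ℕ) (he : e < μ.length) : μ.getD e dpart ∈ μ := by
  rw [List.getD_eq_getElem μ dpart he]
  exact List.getElem_mem he

lemma psize_pos (hov : IsOverPartition μ) (e : ℕ) (he : e < μ.length) : 0 < psize μ e :=
  hov.2.1 _ (getD_mem μ e he)

lemma pval_pos (hov : IsOverPartition μ) (e : ℕ) (he : e < μ.length) : 0 < pval μ e := by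
  have := psize_pos μ hov e he
  rw [pval_def]
  split <;> omega

lemma pval_anti (hov : IsOverPartition μ) {c d : ℕ} (hcd : c ≤ d) : pval μ d ≤ pval μ c := by
  rcases Nat.lt_or_ge d μ.length with hd | hd
  · rcases Nat.eq_or_lt_of_le hcd with rfl | hlt
    · exact le_refl _
    · have hc : c < μ.length := lt_trans hlt hd
      have h2 := List.pairwise_iff_get.mp hov.1 ⟨c, hc⟩ ⟨d, hd⟩ hlt
      unfold pval
      rw [List.getD_eq_getElem μ dpart hd, List.getD_eq_getElem μ dpart hc]
      exact h2
  · rw [pval_eq_zero μ d hd]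
    exact Nat.zero_le _

lemma two_le_count (l : List OPart) {i j : ℕ} (hij : i < j) (hj : j < l.length)
    (hx : l.getD i dpart = l.getD j dpart) : 2 ≤ l.count (l.getD j dpart) := by
  have hi : i < l.length := lt_trans hij hj
  have h1 : l.getD j dpart ∈ l.take j := by
    rw [List.mem_iff_getElem]
    refine ⟨i, by simp [List.length_take]; omega, ?_⟩
    rw [List.getElem_take]
    rw [← hx, List.getD_eq_getElem l dpart hi]
  have h2 : l.getD j dpart ∈ l.drop j := by
    rw [List.mem_iff_getElem]
    refine ⟨0, by simp [List.length_drop]; omega, ?_⟩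
    rw [List.getElem_drop]
    simp only [Nat.add_zero]
    rw [List.getD_eq_getElem l dpart hj]
  calc 2 = 1 + 1 := rfl
    _ ≤ (l.take j).count (l.getD j dpart) + (l.drop j).count (l.getD j dpart) := by
        have := List.count_pos_iff.mpr h1
        have := List.count_pos_iff.mpr h2
        omega
    _ = l.count (l.getD j dpart) := by rw [← List.count_append, List.take_append_drop]

lemma eq_val_absurd (hov : IsOverPartition μ) {e c : ℕ} (he : e < μ.length) (hc : c < μ.length)
    (hne : e ≠ c) (hoe : pover μ e = true) (heq : pval μ c = pval μ e) : False := by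
  have hpe : 0 < psize μ e := psize_pos μ hov e he
  have hpc : 0 < psize μ c := psize_pos μ hov c hc
  have hve : pval μ e = 2 * psize μ e - 1 := by rw [pval_def, hoe]; simp
  have hoc : pover μ c = true := by
    by_contra h
    rw [Bool.not_eq_true] at h
    have : pval μ c = 2 * psize μ c := by rw [pval_def, h]; simp
    omega
  have hvc : pval μ c = 2 * psize μ c - 1 := by rw [pval_def, hoc]; simp
  have hsz : psize μ c = psize μ e := by omega
  have hxx : μ.getD e dpart = μ.getD c dpart :=
    opart_ext _ _ (by simpa [psize] using hsz.symm) (by simp only [pover] at hoe hoc; rw [hoe, hoc])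
  have hkey : μ.getD c dpart = (⟨psize μ e, true⟩ : OPart) :=
    opart_ext _ _ (by simpa [psize] using hsz) (by simpa [pover] using hoc)
  have hcount := hov.2.2 (psize μ e)
  rcases Nat.lt_or_ge e c with h | h
  · have := two_le_count μ h hc hxx
    rw [hkey] at this
    omega
  · have hlt : c < e := by omega
    have := two_le_count μ hlt he hxx.symm
    rw [hxx, hkey] at this
    omega

lemma over_le_iff (hov : IsOverPartition μ) {e : ℕ} (c : ℕ) (he : e < μ.length)
    (hoe : pover μ e = true) : pval μ e ≤ pval μ c ↔ c ≤ e := by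
  constructor
  · intro hle
    by_contra hlt
    push_neg at hlt
    have hanti := pval_anti μ hov (le_of_lt hlt)
    have heq : pval μ c = pval μ e := le_antisymm hanti hle
    rcases Nat.lt_or_ge c μ.length with hc | hc
    · exact eq_val_absurd μ hov he hc (by omega) hoe heq
    · have h0 : pval μ c = 0 := pval_eq_zero μ c hc
      have h1 : 0 < pval μ e := pval_pos μ hov e he
      omega
  · intro h
    exact pval_anti μ hov h

lemma over_ge_iff (hov : IsOverPartition μ) {e : ℕ} (c : ℕ) (he : e < μ.length)
    (hoe : pover μ e = true) : pval μ c ≤ pval μ e ↔ e ≤ c := by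
  constructor
  · intro hle
    by_contra hlt
    push_neg at hlt
    have hanti := pval_anti μ hov (le_of_lt hlt)
    have heq : pval μ c = pval μ e := le_antisymm hle hanti
    have hc : c < μ.length := lt_trans hlt he
    exact eq_val_absurd μ hov he hc (by omega) hoe heq
  · intro h
    exact pval_anti μ hov h

lemma Vbar_split (η : ℕ) (hov : IsOverPartition μ) {c d : ℕ} (hcd : c ≤ d) (hd : d ≤ μ.length) :
    Vbar η μ (pval μ c) = Vbar η μ (pval μ d)
      + ∑ e ∈ Finset.Ico c d, (if pover μ e = true ∧ ¬(psize μ e % η = 0) then 1 else 0) := by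
  unfold Vbar
  rw [countP_eq_sum', countP_eq_sum']
  have hsub : Finset.Ico c d ⊆ Finset.range μ.length := by
    intro x hx
    simp only [Finset.mem_Ico] at hx
    simp only [Finset.mem_range]
    omega
  rw [show (∑ e ∈ Finset.Ico c d,
        (if pover μ e = true ∧ ¬(psize μ e % η = 0) then 1 else 0)) =
      ∑ e ∈ Finset.range μ.length,
        (if e ∈ Finset.Ico c d then
          (if pover μ e = true ∧ ¬(psize μ e % η = 0) then 1 else 0) else 0) from by
    rw [Finset.sum_ite_mem, Finset.inter_eq_right.mpr hsub]]
  rw [← Finset.sum_add_distrib]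
  apply Finset.sum_congr rfl
  intro e hee
  have he : e < μ.length := Finset.mem_range.mp hee
  show (if (pover μ e && decide (pval μ e ≤ pval μ c) && !decide (psize μ e % η = 0)) = true
          then 1 else 0)
     = (if (pover μ e && decide (pval μ e ≤ pval μ d) && !decide (psize μ e % η = 0)) = true
          then 1 else 0)
     + (if e ∈ Finset.Ico c d then
          (if pover μ e = true ∧ ¬(psize μ e % η = 0) then 1 else 0) else 0)
  simp only [Finset.mem_Ico, Bool.and_eq_true, decide_eq_true_eq, Bool.not_eq_true', decide_eq_false_iff_not]
  by_cases ho : pover μ e = true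
  · by_cases hnd : psize μ e % η = 0
    · simp [ho, hnd]
    · have h1 := over_le_iff μ hov c he ho
      have h2 := over_le_iff μ hov d he ho
      simp only [ho, hnd, h1, h2, true_and, not_false_iff, and_true]
      split_ifs <;> omega
  · simp [ho]

lemma Obar_split (η : ℕ) (hov : IsOverPartition μ) {c d : ℕ} (hcd : c ≤ d) (hd : d < μ.length) :
    Obar η μ (pval μ d) = Obar η μ (pval μ c)
      + ∑ e ∈ Finset.Ico (c+1) (d+1), (if pover μ e = true ∧ psize μ e % η = 0 then 1 else 0) := by
  unfold Obar
  rw [countP_eq_sum', countP_eq_sum']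
  have hsub : Finset.Ico (c+1) (d+1) ⊆ Finset.range μ.length := by
    intro x hx
    simp only [Finset.mem_Ico] at hx
    simp only [Finset.mem_range]
    omega
  rw [show (∑ e ∈ Finset.Ico (c+1) (d+1),
        (if pover μ e = true ∧ psize μ e % η = 0 then 1 else 0)) =
      ∑ e ∈ Finset.range μ.length,
        (if e ∈ Finset.Ico (c+1) (d+1) then
          (if pover μ e = true ∧ psize μ e % η = 0 then 1 else 0) else 0) from by
    rw [Finset.sum_ite_mem, Finset.inter_eq_right.mpr hsub]]
  rw [← Finset.sum_add_distrib]
  apply Finset.sum_congr rfl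
  intro e hee
  have he : e < μ.length := Finset.mem_range.mp hee
  show (if (pover μ e && decide (pval μ d ≤ pval μ e) && decide (psize μ e % η = 0)) = true
          then 1 else 0)
     = (if (pover μ e && decide (pval μ c ≤ pval μ e) && decide (psize μ e % η = 0)) = true
          then 1 else 0)
     + (if e ∈ Finset.Ico (c+1) (d+1) then
          (if pover μ e = true ∧ psize μ e % η = 0 then 1 else 0) else 0)
  simp only [Finset.mem_Ico, Bool.and_eq_true, decide_eq_true_eq]
  by_cases ho : pover μ e = true
  · by_cases hnd : psize μ e % η = 0
    · have h1 := over_ge_iff μ hov c he ho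
      have h2 := over_ge_iff μ hov d he ho
      simp only [ho, hnd, h1, h2, true_and, and_true]
      split_ifs <;> omega
    · simp [ho, hnd]
  · simp [ho]

lemma bandSum_eq (η a m : ℕ) :
    bandSum η μ a m = ∑ e ∈ Finset.Ico a (a + m), psize μ e / η := by
  rw [bandSum, Finset.sum_Ico_eq_sum_range]
  simp

/-- classification of parts with value in `(2tη, 2(t+1)η - 2]`. -/
lemma classify_high (η t : ℕ) (hη : 0 < η) (ht : 1 ≤ t) (hov : IsOverPartition μ)
    (hdiv : ∀ p ∈ μ, p.isOver = false → η ∣ p.size) (hsgt : SGt η t μ)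
    {e : ℕ} (he : e < μ.length)
    (h1 : 2 * (t * η) + 1 ≤ pval μ e) (h2 : pval μ e ≤ 2 * ((t + 1) * η) - 2) :
    psize μ e / η + (if pover μ e = true ∧ ¬(psize μ e % η = 0) then 1 else 0) = t + 1 := by
  have hmem := getD_mem μ e he
  have hs : 0 < psize μ e := psize_pos μ hov e he
  have hvd : pval μ e = 2 * psize μ e - (if pover μ e then 1 else 0) := pval_def μ e
  have r1 : (t + 1) * η = t * η + η := by ring
  by_cases ho : pover μ e = true
  · rw [ho, if_pos rfl] at hvd
    by_cases hd : psize μ e % η = 0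
    · exfalso
      have hdvd : η ∣ psize μ e := Nat.dvd_of_mod_eq_zero hd
      have hgt : t * η < psize μ e := hsgt _ hmem ho hdvd
      obtain ⟨m, hm⟩ := hdvd
      have r2 : η * (t + 1) = t * η + η := by ring
      rcases Nat.lt_or_ge m (t + 1) with hc | hc
      · have := Nat.mul_le_mul_left η (by omega : m ≤ t)
        have r3 : η * t = t * η := by ring
        omega
      · have := Nat.mul_le_mul_left η hc
        omega
    · rw [if_pos ⟨ho, hd⟩]
      have hq : psize μ e / η = t := by
        apply Nat.div_eq_of_lt_le
        · omega
        · show psize μ e < (t + 1) * η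
          omega
      omega
  · have ho' : (μ.getD e dpart).isOver = false := by
      have : pover μ e = false := by
        rw [Bool.not_eq_true] at ho
        exact ho
      exact this
    exfalso
    have hdvd : η ∣ psize μ e := hdiv _ hmem ho'
    obtain ⟨m, hm⟩ := hdvd
    rw [if_neg ho] at hvd
    have r2 : η * (t + 1) = t * η + η := by ring
    have r3 : η * t = t * η := by ring
    rcases Nat.lt_or_ge m (t + 1) with hc | hc
    · have := Nat.mul_le_mul_left η (by omega : m ≤ t)
      omega
    · have := Nat.mul_le_mul_left η hc
      omega

/-- classification of parts with value in `[2(t+1)η - 1, 2(t+1)η]`. -/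
lemma classify_top (η t : ℕ) (hη : 0 < η) (ht : 1 ≤ t) (hov : IsOverPartition μ)
    (hdiv : ∀ p ∈ μ, p.isOver = false → η ∣ p.size)
    {e : ℕ} (he : e < μ.length)
    (h1 : 2 * ((t + 1) * η) - 1 ≤ pval μ e) (h2 : pval μ e ≤ 2 * ((t + 1) * η)) :
    psize μ e / η + (if pover μ e = true ∧ ¬(psize μ e % η = 0) then 1 else 0) = t + 1 := by
  have hmem := getD_mem μ e he
  have hs : 0 < psize μ e := psize_pos μ hov e he
  have hvd : pval μ e = 2 * psize μ e - (if pover μ e then 1 else 0) := pval_def μ e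
  have hsz : psize μ e = (t + 1) * η := by
    by_cases ho : pover μ e = true
    · rw [ho, if_pos rfl] at hvd
      omega
    · have ho' : (μ.getD e dpart).isOver = false := by
        rw [Bool.not_eq_true] at ho; exact ho
      have hdvd : η ∣ psize μ e := hdiv _ hmem ho'
      obtain ⟨m, hm⟩ := hdvd
      rw [if_neg ho] at hvd
      have r2 : η * (t + 1) = (t + 1) * η := by ring
      rcases Nat.lt_trichotomy m (t + 1) with hc | hc | hc
      · have := Nat.mul_le_mul_left η (by omega : m ≤ t)
        have r3 : η * t + η = (t + 1) * η := by ring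
        omega
      · omega
      · have := Nat.mul_le_mul_left η (by omega : t + 2 ≤ m)
        have r4 : η * (t + 2) = (t + 1) * η + η := by ring
        omega
  have hmod : psize μ e % η = 0 := by
    rw [hsz]
    exact Nat.mod_eq_zero_of_dvd ⟨t + 1, by ring⟩
  rw [if_neg (by simp [hmod])]
  rw [hsz, Nat.mul_div_cancel _ hη]

/-- classification of parts with value in `[2(t-1)η, 2tη - 1]`. -/
lemma classify_low (η t : ℕ) (hη : 0 < η) (ht : 1 ≤ t) (hov : IsOverPartition μ)
    (hdiv : ∀ p ∈ μ, p.isOver = false → η ∣ p.size) (hsgt : SGt η t μ)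
    {e : ℕ} (he : e < μ.length)
    (h1 : 2 * ((t - 1) * η) ≤ pval μ e) (h2 : pval μ e ≤ 2 * (t * η) - 1) :
    psize μ e / η + (if pover μ e = true ∧ psize μ e % η = 0 then 1 else 0) = t - 1 := by
  have hmem := getD_mem μ e he
  have hs : 0 < psize μ e := psize_pos μ hov e he
  have hvd : pval μ e = 2 * psize μ e - (if pover μ e then 1 else 0) := pval_def μ e
  obtain ⟨t', rfl⟩ : ∃ t', t = t' + 1 := ⟨t - 1, by omega⟩
  have r0 : (t' + 1 - 1) * η = t' * η := by norm_num
  have r1 : (t' + 1) * η = t' * η + η := by ring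
  rw [r0] at h1
  by_cases ho : pover μ e = true
  · rw [ho, if_pos rfl] at hvd
    by_cases hd : psize μ e % η = 0
    · exfalso
      have hdvd : η ∣ psize μ e := Nat.dvd_of_mod_eq_zero hd
      have hgt : (t' + 1) * η < psize μ e := hsgt _ hmem ho hdvd
      omega
    · rw [if_neg (by simp [hd])]
      have hne : psize μ e ≠ (t' + 1) * η := by
        intro hcon
        exact hd (by rw [hcon]; exact Nat.mod_eq_zero_of_dvd ⟨t' + 1, by ring⟩)
      have hq : psize μ e / η = t' := by
        apply Nat.div_eq_of_lt_le
        · omega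
        · show psize μ e < (t' + 1) * η
          omega
      omega
  · have ho' : (μ.getD e dpart).isOver = false := by
      rw [Bool.not_eq_true] at ho; exact ho
    rw [if_neg ho] at hvd
    rw [if_neg (fun hcon => ho hcon.1)]
    have hdvd : η ∣ psize μ e := hdiv _ hmem ho'
    obtain ⟨m, hm⟩ := hdvd
    have hmt : m = t' := by
      have r2 : η * t' = t' * η := by ring
      rcases Nat.lt_trichotomy m t' with hc | hc | hc
      · have := Nat.mul_le_mul_left η (by omega : m + 1 ≤ t')
        have r3 : η * (m + 1) = η * m + η := by ring
        exfalso
        -- η*m + η ≤ η*t' = t'*η, pval = 2*η*m  ≥ 2 t' η impossible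
        omega
      · exact hc
      · have := Nat.mul_le_mul_left η (by omega : t' + 1 ≤ m)
        have r4 : η * (t' + 1) = t' * η + η := by ring
        omega
    rw [hm, hmt, Nat.mul_div_cancel_left _ hη]
    omega

lemma drop_big (η k t : ℕ) (hgge : GGe η k μ (2 * ((t + 1) * η) - 1)) (hk : 2 ≤ k)
    {c : ℕ} (hc : c + (k - 1) ≤ μ.length) (hv : pval μ c ≤ 2 * ((t + 1) * η) - 2)
    (hη : 0 < η) (ht : 1 ≤ t) :
    pval μ (c + k - 2) + 2 * η ≤ pval μ c ∧
      (pover μ c = false → pval μ (c + k - 2) + 2 * η + 1 ≤ pval μ c) := by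
  have hnb : ¬ IsBand η μ (k - 1) c := by
    intro hb
    have := hgge c hb
    have hpos : 1 ≤ (t + 1) * η := Nat.mul_pos (by omega) hη
    omega
  unfold IsBand at hnb
  push_neg at hnb
  have hidx : c + (k - 1) - 1 = c + k - 2 := by omega
  rw [hidx] at hnb
  rcases Classical.em (pval μ c ≤ pval μ (c + k - 2) + 2 * η) with hB | hB
  · obtain ⟨hoc, hnC⟩ := hnb hc hB
    refine ⟨by omega, fun hfalse => ?_⟩
    rw [hfalse] at hoc
    exact absurd hoc (by simp)
  · exact ⟨by omega, fun _ => by omega⟩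

lemma main1 (η k r t' : ℕ) (hη : 0 < η) (hk : 3 ≤ k)
    (hov : IsOverPartition μ)
    (hdiv : ∀ p ∈ μ, p.isOver = false → η ∣ p.size)
    (hsgt : SGt η (t' + 1) μ) (hgge : GGe η k μ (2 * ((t' + 1 + 1) * η) - 1))
    {a b : ℕ} (hab : a < b)
    (hA : BandInO η (t' + 1) μ (k - 2) a) (hB : BandInO η (t' + 1) μ (k - 2) b) :
    (TypeN η r (t' + 1) μ (k - 2) a ↔ TypeN η r (t' + 1) μ (k - 2) b) := by
  obtain ⟨⟨haLen, _, _⟩, haLow, haHigh⟩ := hA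
  obtain ⟨⟨hbLen, _, _⟩, hbLow, hbHigh⟩ := hB
  simp only [Nat.add_sub_cancel] at haLow hbLow
  have hr1 : (t' + 1) * η = t' * η + η := by ring
  have hr2 : (t' + 1 + 1) * η = t' * η + 2 * η := by ring
  have hpos1 : 1 ≤ (t' + 1) * η := Nat.mul_pos (by omega) hη
  have hpos2 : 1 ≤ (t' + 1 + 1) * η := Nat.mul_pos (by omega) hη
  -- S1 : parts in [a, b) are high
  have S1 : ∀ c, a ≤ c → c < b →
      2 * ((t' + 1) * η) + 1 ≤ pval μ c ∧ pval μ c ≤ 2 * ((t' + 1 + 1) * η) - 2 := by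
    intro c h1 h2
    have hup : pval μ c ≤ pval μ a := pval_anti μ hov h1
    have hmono : pval μ (b + (k - 2) - 1) ≤ pval μ (c + k - 2) := pval_anti μ hov (by omega)
    have hdropc := drop_big μ η k (t' + 1) hgge (by omega) (c := c) (by omega) (by omega) hη
      (by omega)
    by_cases hoc : pover μ c = true
    · have hpos : 0 < psize μ c := psize_pos μ hov c (by omega)
      have hvc : pval μ c = 2 * psize μ c - 1 := by
        rw [pval_def, hoc]
        simp
      exact ⟨by omega, by omega⟩
    · have := hdropc.2 (by rw [Bool.not_eq_true] at hoc; exact hoc)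
      exact ⟨by omega, by omega⟩
  -- S2 : parts in [a + (k-2), b + (k-2)) are low
  have S2 : ∀ c, a + (k - 2) ≤ c → c < b + (k - 2) →
      2 * (t' * η) ≤ pval μ c ∧ pval μ c ≤ 2 * ((t' + 1) * η) - 2 := by
    intro c h1 h2
    have hlow : pval μ (b + (k - 2) - 1) ≤ pval μ c := pval_anti μ hov (by omega)
    have hdropa := drop_big μ η k (t' + 1) hgge (by omega) (c := a) (by omega) (by omega) hη
      (by omega)
    have hidx : a + k - 2 = a + (k - 2) := by omega
    rw [hidx] at hdropa
    have hup : pval μ c ≤ pval μ (a + (k - 2)) := pval_anti μ hov h1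
    exact ⟨by omega, by omega⟩
  -- the two bands cannot be too far apart
  have S3 : b ≤ a + (k - 2) := by
    by_contra hcon
    push_neg at hcon
    have h1 := S1 (a + (k - 2)) (by omega) hcon
    have h2 := S2 (a + (k - 2)) (le_refl _) (by omega)
    omega
  -- sum splits
  have hq1 := Finset.sum_Ico_consecutive (fun e => psize μ e / η) (le_of_lt hab) S3
  have hq2 := Finset.sum_Ico_consecutive (fun e => psize μ e / η) S3
    (by omega : a + (k - 2) ≤ b + (k - 2))
  have hV := Vbar_split μ η hov (le_of_lt hab) (by omega : b ≤ μ.length)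
  have hO := Obar_split μ η hov (by omega : a + (k - 2) - 1 ≤ b + (k - 2) - 1)
    (by omega : b + (k - 2) - 1 < μ.length)
  have e1 : a + (k - 2) - 1 + 1 = a + (k - 2) := by omega
  have e2 : b + (k - 2) - 1 + 1 = b + (k - 2) := by omega
  rw [e1, e2] at hO
  -- constant sums
  have hGW : ∑ e ∈ Finset.Ico a b,
      (psize μ e / η + (if pover μ e = true ∧ ¬(psize μ e % η = 0) then 1 else 0))
      = (b - a) * (t' + 1 + 1) := by
    have hconst : ∀ e ∈ Finset.Ico a b,
        (psize μ e / η + (if pover μ e = true ∧ ¬(psize μ e % η = 0) then 1 else 0))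
        = t' + 1 + 1 := by
      intro e hee
      have he := Finset.mem_Ico.mp hee
      exact classify_high μ η (t' + 1) hη (by omega) hov hdiv hsgt (by omega)
        (S1 e he.1 he.2).1 (S1 e he.1 he.2).2
    rw [Finset.sum_congr rfl hconst, Finset.sum_const, Nat.card_Ico, smul_eq_mul]
  have hHU : ∑ e ∈ Finset.Ico (a + (k - 2)) (b + (k - 2)),
      (psize μ e / η + (if pover μ e = true ∧ psize μ e % η = 0 then 1 else 0))
      = (b - a) * (t' + 1 - 1) := by
    have hconst : ∀ e ∈ Finset.Ico (a + (k - 2)) (b + (k - 2)),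
        (psize μ e / η + (if pover μ e = true ∧ psize μ e % η = 0 then 1 else 0))
        = t' + 1 - 1 := by
      intro e hee
      have he := Finset.mem_Ico.mp hee
      have hS2 := S2 e he.1 he.2
      refine classify_low μ η (t' + 1) hη (by omega) hov hdiv hsgt (by omega) ?_ (by omega)
      simp only [Nat.add_sub_cancel]
      exact hS2.1
    rw [Finset.sum_congr rfl hconst, Finset.sum_const, Nat.card_Ico, smul_eq_mul,
      (by omega : b + (k - 2) - (a + (k - 2)) = b - a)]
  rw [Finset.sum_add_distrib] at hGW hHU
  beta_reduce at hq1 hq2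
  have hEE : (b - a) * (t' + 1 + 1) + (b - a) * (t' + 1 - 1) = 2 * ((b - a) * (t' + 1)) := by
    simp only [Nat.add_sub_cancel]
    ring
  unfold TypeN
  rw [bandSum_eq, bandSum_eq]
  unfold Int.ModEq
  omega

lemma main2 (η k r t' : ℕ) (hη : 0 < η) (hk : 3 ≤ k)
    (hov : IsOverPartition μ)
    (hdiv : ∀ p ∈ μ, p.isOver = false → η ∣ p.size)
    (hcond4 : ∀ i, i + k ≤ μ.length →
      pval μ (i + k - 1) + 2 * η ≤ pval μ i ∧
        (pover μ i = false → pval μ (i + k - 1) + 2 * η < pval μ i))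
    (heven : ∀ i, IsBand η μ (k - 1) i → EvenBand η r μ (k - 1) i)
    (hsgt : SGt η (t' + 1) μ) (hgge : GGe η k μ (2 * ((t' + 1 + 1) * η) - 1))
    {i a : ℕ} (hi : IsBand η μ (k - 1) i) (hvi : pval μ i ≤ 2 * ((t' + 1 + 1) * η))
    (hA : BandInO η (t' + 1) μ (k - 2) a) :
    ¬ TypeN η r (t' + 1) μ (k - 2) a := by
  obtain ⟨⟨haLen, _, _⟩, haLow, haHigh⟩ := hA
  simp only [Nat.add_sub_cancel] at haLow
  have hr1 : (t' + 1) * η = t' * η + η := by ring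
  have hr2 : (t' + 1 + 1) * η = t' * η + 2 * η := by ring
  have hpos1 : 1 ≤ (t' + 1) * η := Nat.mul_pos (by omega) hη
  have hpos2 : 1 ≤ (t' + 1 + 1) * η := Nat.mul_pos (by omega) hη
  have hvige := hgge i hi
  have hiLen : i + (k - 1) ≤ μ.length := hi.1
  have hia : i < a := by
    by_contra hcon
    push_neg at hcon
    have := pval_anti μ hov hcon
    omega
  have S1 : ∀ c, i ≤ c → c < a →
      psize μ c / η + (if pover μ c = true ∧ ¬(psize μ c % η = 0) then 1 else 0) = t' + 1 + 1 ∧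
      2 * ((t' + 1) * η) + 1 ≤ pval μ c := by
    intro c h1 h2
    have hce : c < μ.length := by omega
    have hup : pval μ c ≤ pval μ i := pval_anti μ hov h1
    by_cases hcase : 2 * ((t' + 1 + 1) * η) - 1 ≤ pval μ c
    · exact ⟨classify_top μ η (t' + 1) hη (by omega) hov hdiv hce hcase (by omega), by omega⟩
    · push_neg at hcase
      have hmono : pval μ (a + (k - 2) - 1) ≤ pval μ (c + k - 2) := pval_anti μ hov (by omega)
      have hdropc := drop_big μ η k (t' + 1) hgge (by omega) (c := c) (by omega) (by omega) hη
        (by omega)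
      by_cases hoc : pover μ c = true
      · have hposz : 0 < psize μ c := psize_pos μ hov c hce
        have hvc : pval μ c = 2 * psize μ c - 1 := by rw [pval_def, hoc]; simp
        refine ⟨classify_high μ η (t' + 1) hη (by omega) hov hdiv hsgt hce (by omega)
          (by omega), by omega⟩
      · have := hdropc.2 (by rw [Bool.not_eq_true] at hoc; exact hoc)
        refine ⟨classify_high μ η (t' + 1) hη (by omega) hov hdiv hsgt hce (by omega)
          (by omega), by omega⟩
  have S2 : ∀ c, i + (k - 1) ≤ c → c < a + (k - 2) →
      psize μ c / η + (if pover μ c = true ∧ psize μ c % η = 0 then 1 else 0) = t' + 1 - 1 ∧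
      pval μ c ≤ 2 * ((t' + 1) * η) - 1 := by
    intro c h1 h2
    have hik : i + k ≤ μ.length := by omega
    have hc4 := hcond4 i hik
    have hvik : pval μ (i + k - 1) ≤ 2 * ((t' + 1) * η) - 1 := by
      by_cases hoi : pover μ i = true
      · have hposz : 0 < psize μ i := psize_pos μ hov i (by omega)
        have hvio : pval μ i = 2 * psize μ i - 1 := by rw [pval_def, hoi]; simp
        omega
      · have := hc4.2 (by rw [Bool.not_eq_true] at hoi; exact hoi)
        omega
    have hup : pval μ c ≤ pval μ (i + k - 1) := pval_anti μ hov (by omega)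
    have hlow : pval μ (a + (k - 2) - 1) ≤ pval μ c := pval_anti μ hov (by omega)
    refine ⟨?_, by omega⟩
    refine classify_low μ η (t' + 1) hη (by omega) hov hdiv hsgt (by omega) ?_ (by omega)
    simp only [Nat.add_sub_cancel]
    omega
  have S3 : a ≤ i + (k - 1) := by
    by_contra hcon
    push_neg at hcon
    have h1 := S1 (i + (k - 1)) (by omega) hcon
    have h2 := S2 (i + (k - 1)) (le_refl _) (by omega)
    omega
  have hq1 := Finset.sum_Ico_consecutive (fun e => psize μ e / η) (le_of_lt hia) S3
  have hq2 := Finset.sum_Ico_consecutive (fun e => psize μ e / η) S3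
    (by omega : i + (k - 1) ≤ a + (k - 2))
  have hV := Vbar_split μ η hov (le_of_lt hia) (by omega : a ≤ μ.length)
  have hO := Obar_split μ η hov (by omega : i + (k - 1) - 1 ≤ a + (k - 2) - 1)
    (by omega : a + (k - 2) - 1 < μ.length)
  have e1 : i + (k - 1) - 1 + 1 = i + (k - 1) := by omega
  have e2 : a + (k - 2) - 1 + 1 = a + (k - 2) := by omega
  rw [e1, e2] at hO
  have hGW : ∑ e ∈ Finset.Ico i a,
      (psize μ e / η + (if pover μ e = true ∧ ¬(psize μ e % η = 0) then 1 else 0))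
      = (a - i) * (t' + 1 + 1) := by
    have hconst : ∀ e ∈ Finset.Ico i a,
        (psize μ e / η + (if pover μ e = true ∧ ¬(psize μ e % η = 0) then 1 else 0))
        = t' + 1 + 1 := by
      intro e hee
      have he := Finset.mem_Ico.mp hee
      exact (S1 e he.1 he.2).1
    rw [Finset.sum_congr rfl hconst, Finset.sum_const, Nat.card_Ico, smul_eq_mul]
  have hHU : ∑ e ∈ Finset.Ico (i + (k - 1)) (a + (k - 2)),
      (psize μ e / η + (if pover μ e = true ∧ psize μ e % η = 0 then 1 else 0))
      = (a - i - 1) * (t' + 1 - 1) := by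
    have hconst : ∀ e ∈ Finset.Ico (i + (k - 1)) (a + (k - 2)),
        (psize μ e / η + (if pover μ e = true ∧ psize μ e % η = 0 then 1 else 0))
        = t' + 1 - 1 := by
      intro e hee
      have he := Finset.mem_Ico.mp hee
      exact (S2 e he.1 he.2).1
    rw [Finset.sum_congr rfl hconst, Finset.sum_const, Nat.card_Ico, smul_eq_mul,
      (by omega : a + (k - 2) - (i + (k - 1)) = a - i - 1)]
  rw [Finset.sum_add_distrib] at hGW hHU
  beta_reduce at hq1 hq2
  obtain ⟨D', hD'⟩ : ∃ D', a - i = D' + 1 := ⟨a - i - 1, by omega⟩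
  rw [hD'] at hGW
  rw [(by omega : a - i - 1 = D')] at hHU
  have hEE : (D' + 1) * (t' + 1 + 1) + D' * (t' + 1 - 1) + (t' + 1)
      = 2 * ((D' + 1) * (t' + 1)) + 1 := by
    simp only [Nat.add_sub_cancel]
    ring
  have heb := heven i hi
  unfold EvenBand at heb
  rw [bandSum_eq] at heb
  intro htype
  unfold TypeN at htype
  rw [bandSum_eq] at htype
  unfold Int.ModEq at heb htype
  omega

lemma k2_unique (η k t : ℕ) (hη : 0 < η) (hk : k = 2)
    (hgge : GGe η k μ (2 * ((t + 1) * η) - 1)) {i : ℕ}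
    (hA : BandInO η t μ (k - 2) i) : i = μ.length := by
  subst hk
  obtain ⟨⟨hiLen, _, _⟩, _, hHigh⟩ := hA
  by_contra hcon
  have hi : i < μ.length := by omega
  have hband : IsBand η μ (2 - 1) i := by
    refine ⟨by omega, ?_, ?_⟩
    · rw [show i + (2 - 1) - 1 = i by omega]
      omega
    · rw [show i + (2 - 1) - 1 = i by omega]
      intro
      omega
  have := hgge i hband
  have hpos : 1 ≤ (t + 1) * η := Nat.mul_pos (by omega) hη
  omega

lemma k2_part2 (η k r t : ℕ) (hη : 0 < η) (ht : 1 ≤ t) (hk : k = 2)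
    (hov : IsOverPartition μ)
    (hcong0 : ∀ p ∈ μ, p.size % η = 0)
    (heven : ∀ i, IsBand η μ (k - 1) i → EvenBand η r μ (k - 1) i)
    (hgge : GGe η k μ (2 * ((t + 1) * η) - 1))
    {i0 a : ℕ} (hi0 : IsBand η μ (k - 1) i0) (hvi0 : pval μ i0 ≤ 2 * ((t + 1) * η))
    (hA : BandInO η t μ (k - 2) a) : ¬ TypeN η r t μ (k - 2) a := by
  have ha : a = μ.length := k2_unique μ η k t hη hk hgge hA
  subst hk
  subst ha
  have hi0len := hi0.1
  have hlen : 1 ≤ μ.length := by omega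
  set c := μ.length - 1 with hc
  have hcb : IsBand η μ (2 - 1) c := by
    refine ⟨by omega, ?_, ?_⟩
    · rw [show c + (2 - 1) - 1 = c by omega]
      omega
    · rw [show c + (2 - 1) - 1 = c by omega]
      intro
      omega
  have hvcge := hgge c hcb
  have hvcle : pval μ c ≤ pval μ i0 := pval_anti μ hov (by omega)
  have hce : c < μ.length := by omega
  have hdvd : psize μ c % η = 0 := by
    have := hcong0 _ (getD_mem μ c hce)
    exact this
  obtain ⟨m, hm⟩ := Nat.dvd_of_mod_eq_zero hdvd
  have hposz : 0 < psize μ c := psize_pos μ hov c hce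
  have hvd := pval_def μ c
  have hvb : 2 * psize μ c - 1 ≤ pval μ c ∧ pval μ c ≤ 2 * psize μ c := by
    rw [hvd]
    split <;> omega
  have hpos2 : 1 ≤ (t + 1) * η := Nat.mul_pos (by omega) hη
  have hmt : m = t + 1 := by
    rcases Nat.lt_trichotomy m (t + 1) with hcm | hcm | hcm
    · have := Nat.mul_le_mul_left η (by omega : m ≤ t)
      have r3 : η * t + η = (t + 1) * η := by ring
      omega
    · exact hcm
    · have := Nat.mul_le_mul_left η (by omega : t + 2 ≤ m)
      have r4 : η * (t + 2) = (t + 1) * η + η := by ring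
      omega
  have hdivq : psize μ c / η = t + 1 := by
    rw [hm, hmt, Nat.mul_div_cancel_left _ hη]
  have hVz : ∀ N, Vbar η μ N = 0 := by
    intro N
    unfold Vbar
    rw [List.countP_eq_zero]
    intro p hp
    have := hcong0 p hp
    simp [this]
  have heb := heven c hcb
  unfold EvenBand at heb
  rw [show c + (2 - 1) - 1 = c by omega] at heb
  have hbs : bandSum η μ c (2 - 1) = t + 1 := by
    unfold bandSum
    rw [show (2:ℕ) - 1 = 1 from rfl, Finset.sum_range_one, Nat.add_zero, hdivq]
  rw [hbs, hVz] at heb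
  intro htype
  unfold TypeN at htype
  rw [show μ.length + (2 - 2) - 1 = c by omega] at htype
  have hbs0 : bandSum η μ μ.length (2 - 2) = 0 := by
    unfold bandSum
    rw [show (2:ℕ) - 2 = 0 from rfl, Finset.sum_range_zero]
  rw [hbs0, hVz] at htype
  unfold Int.ModEq at heb htype
  omega

end Aux

theorem stmt_9 (α : ℕ → ℕ) (lam η k r : ℕ)
    (hη : 0 < η)
    (hαpos : ∀ i, 1 ≤ i → i ≤ lam → 0 < α i ∧ α i < η)
    (hαmono : ∀ i j, 1 ≤ i → i < j → j ≤ lam → α i < α j)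
    (hαsym : ∀ i, 1 ≤ i → i ≤ lam → α i = η - α (lam + 1 - i))
    (hrk : r < k) (hlr : lam ≤ r) (hlk : lam + 1 < k)
    (t : ℕ) (ht : 1 ≤ t) (μ : List OPart) (hμ : InBgt α lam η k r t μ)
    (hex : ∃ i, BandInO η t μ (k - 2) i) :
    (∀ i j, BandInO η t μ (k - 2) i → BandInO η t μ (k - 2) j →
      (TypeN η r t μ (k - 2) i ↔ TypeN η r t μ (k - 2) j)) ∧
    ((∃ i, IsBand η μ (k - 1) i ∧ pval μ i ≤ 2 * ((t + 1) * η)) →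
      ∀ i, BandInO η t μ (k - 2) i → ¬ TypeN η r t μ (k - 2) i) := by
  obtain ⟨⟨⟨hov, hcong, hdiv, hcond4, hfle⟩, hcond5, heven⟩, hsgt, hgge⟩ := hμ
  obtain ⟨t', rfl⟩ : ∃ t', t = t' + 1 := ⟨t - 1, by omega⟩
  rcases Nat.lt_or_ge k 3 with hk2 | hk3
  · have hk : k = 2 := by omega
    constructor
    · intro i j hi hj
      rw [k2_unique μ η k (t' + 1) hη hk hgge hi, k2_unique μ η k (t' + 1) hη hk hgge hj]
    · rintro ⟨i0, hi0, hvi0⟩ a hA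
      have hcong0 : ∀ p ∈ μ, p.size % η = 0 := by
        intro p hp
        rcases hcong p hp with h | ⟨s, hs1, hs2, _⟩
        · exact h
        · omega
      exact k2_part2 μ η k r (t' + 1) hη (by omega) hk hov hcong0 heven hgge hi0 hvi0 hA
  · constructor
    · intro i j hi hj
      rcases lt_trichotomy i j with h | h | h
      · exact main1 μ η k r t' hη hk3 hov hdiv hsgt hgge h hi hj
      · rw [h]
      · exact (main1 μ η k r t' hη hk3 hov hdiv hsgt hgge h hj hi).symm
    · rintro ⟨i0, hi0, hvi0⟩ a hA
      exact main2 μ η k r t' hη hk3 hov hdiv hcond4 heven hsgt hgge hi0 hvi0 hA
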